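/- Let m : ℝ → ℝ be bounded and continuous and set u = p*m. Then sup_x |u(x)| ≤ sup_x |m(x)|, sup_x |u'(x)| ≤ sup_x |m(x)|, and sup_x |u''(x)| ≤ 2·sup_x |m(x)|; in particular sup|u| + sup|u'| + sup|u''| ≤ 4·sup|m|. -/

import Mathlib

open MeasureTheory Real Set

/-- The convolution `(p*f)(x) = ∫_ℝ (1/2) e^{-|x-y|} f(y) dy` with `p(x) = (1/2)exp(-|x|)`. -/
noncomputable def pConv (f : ℝ → ℝ) (x : ℝ) : ℝ := ∫ y : ℝ, (1/2) * Real.exp (-|x - y|) * f y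

/-- `(p₊*f)(x) = (1/2)∫_{-∞}^{x} e^{y-x} f(y) dy`. -/
noncomputable def pPlus (f : ℝ → ℝ) (x : ℝ) : ℝ := (1/2) * ∫ y in Set.Iic x, Real.exp (y - x) * f y

/-- `(p₋*f)(x) = (1/2)∫_{x}^{∞} e^{x-y} f(y) dy`. -/
noncomputable def pMinus (f : ℝ → ℝ) (x : ℝ) : ℝ := (1/2) * ∫ y in Set.Ici x, Real.exp (x - y) * f y

section Aux

variable {m : ℝ → ℝ} {M : ℝ}

lemma intPlus (hm : Continuous m) (hM : ∀ x, |m x| ≤ M) (x : ℝ) :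
    IntegrableOn (fun y => Real.exp y * m y) (Set.Iic x) := by
  refine Integrable.mono' ((integrableOn_exp_Iic x).mul_const M)
    ((continuous_exp.mul hm).aestronglyMeasurable.restrict) ?_
  filter_upwards with y
  rw [norm_mul, Real.norm_eq_abs, Real.norm_eq_abs, Real.abs_exp]
  exact mul_le_mul_of_nonneg_left (hM y) (Real.exp_pos y).le

lemma intPlus' (hm : Continuous m) (hM : ∀ x, |m x| ≤ M) (x : ℝ) :
    IntegrableOn (fun y => Real.exp (y - x) * m y) (Set.Iic x) := by
  refine ((intPlus hm hM x).const_mul (Real.exp (-x))).congr (.of_forall fun y => ?_)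
  simp only [Real.exp_sub, Real.exp_neg]; ring

lemma pPlus_eq (hm : Continuous m) (hM : ∀ x, |m x| ≤ M) (x : ℝ) :
    pPlus m x = (1/2) * (Real.exp (-x) * ∫ y in Set.Iic x, Real.exp y * m y) := by
  unfold pPlus
  rw [show Real.exp (-x) * (∫ y in Set.Iic x, Real.exp y * m y)
      = ∫ y in Set.Iic x, Real.exp (-x) * (Real.exp y * m y) from
    (integral_const_mul (Real.exp (-x)) fun y => Real.exp y * m y).symm]
  refine congrArg _ (integral_congr_ae (.of_forall fun y => ?_))
  simp only [Real.exp_sub, Real.exp_neg]; ring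

lemma hasDerivAt_pPlus (hm : Continuous m) (hM : ∀ x, |m x| ≤ M) (x : ℝ) :
    HasDerivAt (pPlus m) (-(pPlus m x) + (1/2) * m x) x := by
  have hF : HasDerivAt (fun u => ∫ y in Set.Iic u, Real.exp y * m y) (Real.exp x * m x) x := by
    have h1 : (fun u => ∫ y in Set.Iic u, Real.exp y * m y)
        = fun u => (∫ y in Set.Iic (0:ℝ), Real.exp y * m y)
          + ∫ y in (0:ℝ)..u, Real.exp y * m y := by
      funext u
      rw [← intervalIntegral.integral_Iic_sub_Iic (intPlus hm hM 0) (intPlus hm hM u)]; ring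
    rw [h1]
    exact (((continuous_exp.mul hm).integral_hasStrictDerivAt 0 x).hasDerivAt).const_add _
  have hE : HasDerivAt (fun u : ℝ => Real.exp (-u)) (Real.exp (-x) * (-1)) x :=
    HasDerivAt.exp (hasDerivAt_neg x)
  have h := ((hE.mul hF).const_mul (1/2 : ℝ))
  have heq : pPlus m = fun u => (1/2 : ℝ) *
      (Real.exp (-u) * ∫ y in Set.Iic u, Real.exp y * m y) := funext (pPlus_eq hm hM)
  rw [heq]
  refine h.congr_deriv (Eq.symm ?_)
  have h2 : Real.exp (-x) * Real.exp x = 1 := by rw [← Real.exp_add]; simp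
  simp only [pPlus_eq hm hM]
  linear_combination (-(m x) / 2) * h2

lemma int_exp_Iic (x : ℝ) : IntegrableOn (fun y => Real.exp (y - x)) (Set.Iic x) := by
  simpa only [Real.exp_sub, IntegrableOn] using (integrableOn_exp_Iic x).div_const (Real.exp x)

lemma pPlus_bound (hm : Continuous m) (hM : ∀ x, |m x| ≤ M) (x : ℝ) :
    |pPlus m x| ≤ M / 2 := by
  have hM0 : (0:ℝ) ≤ M := le_trans (abs_nonneg _) (hM 0)
  unfold pPlus
  rw [abs_mul]
  have key : |∫ y in Set.Iic x, Real.exp (y - x) * m y| ≤ M := by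
    have hle : ‖∫ y in Set.Iic x, Real.exp (y - x) * m y‖
        ≤ ∫ y in Set.Iic x, Real.exp (y - x) * M := by
      refine norm_integral_le_of_norm_le ((int_exp_Iic x).mul_const M)
        (.of_forall fun y => ?_)
      rw [norm_mul, Real.norm_eq_abs, Real.norm_eq_abs, Real.abs_exp]
      exact mul_le_mul_of_nonneg_left (hM y) (Real.exp_pos _).le
    have hval : (∫ y in Set.Iic x, Real.exp (y - x) * M)
        = (∫ y in Set.Iic x, Real.exp (y - x)) * M := by
      rw [← integral_mul_const]
    have hone : (∫ y in Set.Iic x, Real.exp (y - x)) = 1 := by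
      have : (fun y => Real.exp (y - x)) = fun y => Real.exp y * Real.exp (-x) := by
        funext y; rw [Real.exp_sub, Real.exp_neg]; ring
      rw [this, integral_mul_const, integral_exp_Iic, ← Real.exp_add]; simp
    rw [Real.norm_eq_abs] at hle
    calc |∫ y in Set.Iic x, Real.exp (y - x) * m y| ≤ _ := hle
      _ = M := by rw [hval, hone, one_mul]
  calc |1/2| * |∫ y in Set.Iic x, Real.exp (y - x) * m y| ≤ |1/2| * M := by
        exact mul_le_mul_of_nonneg_left key (abs_nonneg _)
    _ = M / 2 := by rw [abs_of_nonneg (by norm_num : (0:ℝ) ≤ 1/2)]; ring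

lemma pMinus_eq (m : ℝ → ℝ) (x : ℝ) : pMinus m x = pPlus (fun y => m (-y)) (-x) := by
  unfold pMinus pPlus
  congr 1
  rw [integral_Ici_eq_integral_Ioi,
    ← integral_comp_neg_Ioi x (fun y => Real.exp (y - -x) * m (-y))]
  refine integral_congr_ae (.of_forall fun y => ?_)
  simp only [neg_neg]
  ring_nf

lemma hasDerivAt_pMinus (hm : Continuous m) (hM : ∀ x, |m x| ≤ M) (x : ℝ) :
    HasDerivAt (pMinus m) (pMinus m x - (1/2) * m x) x := by
  have hm' : Continuous (fun y => m (-y)) := hm.comp continuous_neg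
  have hM' : ∀ y, |m (-y)| ≤ M := fun y => hM (-y)
  have h := (hasDerivAt_pPlus hm' hM' (-x)).comp x (hasDerivAt_neg x)
  have heq : pMinus m = fun u => pPlus (fun y => m (-y)) (-u) := funext (pMinus_eq m)
  rw [heq]
  refine h.congr_deriv (Eq.symm ?_)
  simp only [neg_neg]
  ring

lemma pMinus_bound (hm : Continuous m) (hM : ∀ x, |m x| ≤ M) (x : ℝ) :
    |pMinus m x| ≤ M / 2 := by
  rw [pMinus_eq m x]
  exact pPlus_bound (hm.comp continuous_neg) (fun y => hM (-y)) (-x)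

lemma intMinus' (hm : Continuous m) (hM : ∀ x, |m x| ≤ M) (x : ℝ) :
    IntegrableOn (fun y => Real.exp (x - y) * m y) (Set.Ici x) := by
  rw [integrableOn_Ici_iff_integrableOn_Ioi]
  have h0 : IntegrableOn (fun y : ℝ => Real.exp (-y)) (Set.Ioi x) := by
    simpa [neg_mul, one_mul] using exp_neg_integrableOn_Ioi x one_pos
  have hg : IntegrableOn (fun y => Real.exp (x - y) * M) (Set.Ioi x) := by
    refine ((h0.const_mul (Real.exp x)).mul_const M).congr (.of_forall fun y => ?_)
    simp only [Real.exp_sub, Real.exp_neg]; ring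
  refine Integrable.mono' hg
    (((continuous_const.sub continuous_id).rexp.mul hm).aestronglyMeasurable.restrict)
    (.of_forall fun y => ?_)
  rw [norm_mul, Real.norm_eq_abs, Real.norm_eq_abs, Real.abs_exp]
  exact mul_le_mul_of_nonneg_left (hM y) (Real.exp_pos _).le

lemma pConv_eq (hm : Continuous m) (hM : ∀ x, |m x| ≤ M) (x : ℝ) :
    pConv m x = pPlus m x + pMinus m x := by
  have h1 : IntegrableOn (fun y => (1/2) * Real.exp (-|x - y|) * m y) (Set.Iic x) := by
    refine ((intPlus' hm hM x).const_mul (1/2)).congr ?_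
    filter_upwards [ae_restrict_mem measurableSet_Iic] with y hy
    rw [abs_of_nonneg (sub_nonneg.mpr (mem_Iic.mp hy)), neg_sub]; ring
  have h2 : IntegrableOn (fun y => (1/2) * Real.exp (-|x - y|) * m y) (Set.Ioi x) := by
    refine (((intMinus' hm hM x).mono_set Set.Ioi_subset_Ici_self).const_mul (1/2)).congr ?_
    filter_upwards [ae_restrict_mem measurableSet_Ioi] with y hy
    have hxy : -|x - y| = x - y := by
      rw [abs_of_nonpos (by linarith [mem_Ioi.mp hy] : x - y ≤ 0)]; ring
    rw [hxy]; ring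
  unfold pConv
  rw [← intervalIntegral.integral_Iic_add_Ioi h1 h2]
  congr 1
  · unfold pPlus
    rw [← integral_const_mul]
    refine setIntegral_congr_fun measurableSet_Iic fun y hy => ?_
    rw [abs_of_nonneg (sub_nonneg.mpr (mem_Iic.mp hy)), neg_sub]; ring
  · unfold pMinus
    rw [← integral_const_mul, integral_Ici_eq_integral_Ioi]
    refine setIntegral_congr_fun measurableSet_Ioi fun y hy => ?_
    have hxy : -|x - y| = x - y := by
      rw [abs_of_nonpos (by linarith [mem_Ioi.mp hy] : x - y ≤ 0)]; ring
    rw [hxy]; ring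

lemma hasDerivAt_pConv (hm : Continuous m) (hM : ∀ x, |m x| ≤ M) (x : ℝ) :
    HasDerivAt (pConv m) (pMinus m x - pPlus m x) x := by
  have heq : pConv m = fun u => pPlus m u + pMinus m u := funext (pConv_eq hm hM)
  rw [heq]
  have h := (hasDerivAt_pPlus hm hM x).add (hasDerivAt_pMinus hm hM x)
  refine h.congr_deriv (Eq.symm ?_); ring

end Aux

theorem stmt3 (m : ℝ → ℝ) (hm : Continuous m) (hb : ∃ C, ∀ x, |m x| ≤ C) :
    (⨆ x : ℝ, |pConv m x|) ≤ (⨆ x : ℝ, |m x|) ∧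
    (⨆ x : ℝ, |deriv (pConv m) x|) ≤ (⨆ x : ℝ, |m x|) ∧
    (⨆ x : ℝ, |deriv (deriv (pConv m)) x|) ≤ 2 * (⨆ x : ℝ, |m x|) ∧
    (⨆ x : ℝ, |pConv m x|) + (⨆ x : ℝ, |deriv (pConv m) x|)
      + (⨆ x : ℝ, |deriv (deriv (pConv m)) x|) ≤ 4 * (⨆ x : ℝ, |m x|) := by
  obtain ⟨C, hC⟩ := hb
  have hbdd : BddAbove (Set.range fun x => |m x|) := ⟨C, by rintro _ ⟨x, rfl⟩; exact hC x⟩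
  set M := ⨆ x : ℝ, |m x| with hMdef
  have hM : ∀ x, |m x| ≤ M := fun x => le_ciSup hbdd x
  have hd1 : deriv (pConv m) = fun x => pMinus m x - pPlus m x := by
    funext x; exact (hasDerivAt_pConv hm hM x).deriv
  have hd2 : deriv (deriv (pConv m)) = fun x => pConv m x - m x := by
    rw [hd1]; funext x
    have h := (hasDerivAt_pMinus hm hM x).sub (hasDerivAt_pPlus hm hM x)
    have he : pMinus m x - (1/2) * m x - (-(pPlus m x) + (1/2) * m x)
        = pConv m x - m x := by
      rw [pConv_eq hm hM]; ring
    rw [← he]; exact h.deriv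
  have b1 : ∀ x, |pConv m x| ≤ M := fun x => by
    rw [pConv_eq hm hM]
    calc |pPlus m x + pMinus m x| ≤ |pPlus m x| + |pMinus m x| := abs_add_le _ _
      _ ≤ M / 2 + M / 2 := add_le_add (pPlus_bound hm hM x) (pMinus_bound hm hM x)
      _ = M := by ring
  have b2 : ∀ x, |deriv (pConv m) x| ≤ M := fun x => by
    rw [hd1]
    calc |pMinus m x - pPlus m x| ≤ |pMinus m x| + |pPlus m x| := abs_sub _ _
      _ ≤ M / 2 + M / 2 := add_le_add (pMinus_bound hm hM x) (pPlus_bound hm hM x)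
      _ = M := by ring
  have b3 : ∀ x, |deriv (deriv (pConv m)) x| ≤ 2 * M := fun x => by
    rw [hd2]
    calc |pConv m x - m x| ≤ |pConv m x| + |m x| := abs_sub _ _
      _ ≤ M + M := add_le_add (b1 x) (hM x)
      _ = 2 * M := by ring
  have s1 : (⨆ x : ℝ, |pConv m x|) ≤ M := ciSup_le b1
  have s2 : (⨆ x : ℝ, |deriv (pConv m) x|) ≤ M := ciSup_le b2
  have s3 : (⨆ x : ℝ, |deriv (deriv (pConv m)) x|) ≤ 2 * M := ciSup_le b3
  exact ⟨s1, s2, s3, by linarith⟩
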